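/- For every a > √2 and every integer n ≥ 0, the open intervals (n a√(a²−2), (n+1) a√(a²−2)) and (hₙ⁰(a), hₙ¹(a)) have nonempty intersection, where hₙ⁰(a) = n a√(a²−2) and hₙ¹(a) > hₙ⁰(a) is the unique h with Δₙ(a,h) = 1. In particular, since the intervals (n a√(a²−2), (n+1) a√(a²−2)) for n = 0, 1, 2, ... cover (0, ∞), for every H > 0 there exist n and h > H with 0 < Δₙ(a,h) < 1. -/
import Mathlib


open Real Filter Set

/-- For `a > √2` and each `n`, the intervals `(n a√(a²−2), (n+1) a√(a²−2))` and
`(hₙ⁰(a), hₙ¹(a))` intersect, where `hₙ⁰(a) = n a√(a²−2)` and `hₙ¹(a)` is the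
unique `h > hₙ⁰(a)` with `Δₙ(a,h) = 1`. Since the intervals
`(n a√(a²−2), (n+1) a√(a²−2))` cover `(0,∞)`, for every `H > 0` there exist `n`
and `h > H` with `0 < Δₙ(a,h) < 1`: no upper bound on `h` for elliptic islands. -/
theorem no_upper_bound_for_ellipticity (a : ℝ) (ha : Real.sqrt 2 < a)
    (Δ : ℕ → ℝ → ℝ) (h1 : ℕ → ℝ)
    (hmono : ∀ n : ℕ, StrictMonoOn (Δ n) (Ioi ((n : ℝ) * a * Real.sqrt (a ^ 2 - 2))))
    (hcont : ∀ n : ℕ, ContinuousOn (Δ n) (Ioi ((n : ℝ) * a * Real.sqrt (a ^ 2 - 2))))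
    (hlim0 : ∀ n : ℕ, Tendsto (Δ n)
      (nhdsWithin ((n : ℝ) * a * Real.sqrt (a ^ 2 - 2))
        (Ioi ((n : ℝ) * a * Real.sqrt (a ^ 2 - 2)))) (nhds 0))
    (hlimtop : ∀ n : ℕ, Tendsto (Δ n) atTop atTop)
    (hh1 : ∀ n : ℕ, (n : ℝ) * a * Real.sqrt (a ^ 2 - 2) < h1 n ∧ Δ n (h1 n) = 1) :
    (∀ n : ℕ,
      (Ioo ((n : ℝ) * a * Real.sqrt (a ^ 2 - 2)) (((n : ℝ) + 1) * a * Real.sqrt (a ^ 2 - 2)) ∩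
        Ioo ((n : ℝ) * a * Real.sqrt (a ^ 2 - 2)) (h1 n)).Nonempty) ∧
    ∀ H : ℝ, 0 < H → ∃ (n : ℕ) (h : ℝ), H < h ∧ 0 < Δ n h ∧ Δ n h < 1 := by
  have ha0 : 0 < a := lt_of_le_of_lt (Real.sqrt_nonneg 2) ha
  have ha2 : (2 : ℝ) < a ^ 2 := by
    nlinarith [Real.sq_sqrt (by norm_num : (0:ℝ) ≤ 2), Real.sqrt_nonneg 2]
  have hc : 0 < a * Real.sqrt (a ^ 2 - 2) :=
    mul_pos ha0 (Real.sqrt_pos.mpr (by linarith))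
  set c := a * Real.sqrt (a ^ 2 - 2) with hcdef
  -- key lemma: for h in (n*c, h1 n), 0 < Δ n h < 1
  have key : ∀ n : ℕ, ∀ h : ℝ, (n : ℝ) * c < h → h < h1 n → 0 < Δ n h ∧ Δ n h < 1 := by
    intro n h hh hh1'
    have hnc : (n : ℝ) * a * Real.sqrt (a ^ 2 - 2) = (n : ℝ) * c := by ring
    have hmem : h ∈ Ioi ((n : ℝ) * a * Real.sqrt (a ^ 2 - 2)) := by
      rw [hnc]; exact hh
    have hmem1 : h1 n ∈ Ioi ((n : ℝ) * a * Real.sqrt (a ^ 2 - 2)) := (hh1 n).1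
    have hlt1 : Δ n h < 1 := by
      have := hmono n hmem hmem1 hh1'
      rw [(hh1 n).2] at this; exact this
    -- midpoint
    set m := ((n : ℝ) * c + h) / 2 with hmdef
    have hm1 : (n : ℝ) * c < m := by rw [hmdef]; linarith
    have hm2 : m < h := by rw [hmdef]; linarith
    have hmmem : m ∈ Ioi ((n : ℝ) * a * Real.sqrt (a ^ 2 - 2)) := by rw [hnc]; exact hm1
    have hge : 0 ≤ Δ n m := by
      have hne : (nhdsWithin ((n : ℝ) * a * Real.sqrt (a ^ 2 - 2))
          (Ioi ((n : ℝ) * a * Real.sqrt (a ^ 2 - 2)))).NeBot := nhdsGT_neBot _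
      refine le_of_tendsto (hlim0 n) ?_
      have hev1 : ∀ᶠ x in nhdsWithin ((n : ℝ) * a * Real.sqrt (a ^ 2 - 2))
          (Ioi ((n : ℝ) * a * Real.sqrt (a ^ 2 - 2))), x < m := by
        apply eventually_nhdsWithin_of_eventually_nhds
        exact Filter.Tendsto.eventually_lt_const (by rw [hnc]; exact hm1) tendsto_id
      have hev2 : ∀ᶠ x in nhdsWithin ((n : ℝ) * a * Real.sqrt (a ^ 2 - 2))
          (Ioi ((n : ℝ) * a * Real.sqrt (a ^ 2 - 2))),
          x ∈ Ioi ((n : ℝ) * a * Real.sqrt (a ^ 2 - 2)) := eventually_mem_nhdsWithin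
      filter_upwards [hev1, hev2] with x hx1 hx2
      exact le_of_lt (hmono n hx2 hmmem hx1)
    exact ⟨lt_of_le_of_lt hge (hmono n hmmem hmem hm2), hlt1⟩
  constructor
  · intro n
    refine ⟨min (((n : ℝ) * a * Real.sqrt (a ^ 2 - 2) + ((n : ℝ) + 1) * a * Real.sqrt (a ^ 2 - 2)) / 2)
      (((n : ℝ) * a * Real.sqrt (a ^ 2 - 2) + h1 n) / 2), ?_, ?_⟩
    · constructor
      · apply lt_min
        · have : (n : ℝ) * a * Real.sqrt (a ^ 2 - 2) < ((n : ℝ) + 1) * a * Real.sqrt (a ^ 2 - 2) := by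
            have h1' : (n : ℝ) * a * Real.sqrt (a ^ 2 - 2) = (n : ℝ) * c := by ring
            have h2' : ((n : ℝ) + 1) * a * Real.sqrt (a ^ 2 - 2) = ((n : ℝ) + 1) * c := by ring
            rw [h1', h2']
            nlinarith [hc]
          linarith
        · have := (hh1 n).1; linarith
      · have : (n : ℝ) * a * Real.sqrt (a ^ 2 - 2) < ((n : ℝ) + 1) * a * Real.sqrt (a ^ 2 - 2) := by
          have h1' : (n : ℝ) * a * Real.sqrt (a ^ 2 - 2) = (n : ℝ) * c := by ring
          have h2' : ((n : ℝ) + 1) * a * Real.sqrt (a ^ 2 - 2) = ((n : ℝ) + 1) * c := by ring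
          rw [h1', h2']; nlinarith [hc]
        calc min _ _ ≤ _ := min_le_left _ _
          _ < ((n : ℝ) + 1) * a * Real.sqrt (a ^ 2 - 2) := by linarith
    · constructor
      · apply lt_min
        · have : (n : ℝ) * a * Real.sqrt (a ^ 2 - 2) < ((n : ℝ) + 1) * a * Real.sqrt (a ^ 2 - 2) := by
            have h1' : (n : ℝ) * a * Real.sqrt (a ^ 2 - 2) = (n : ℝ) * c := by ring
            have h2' : ((n : ℝ) + 1) * a * Real.sqrt (a ^ 2 - 2) = ((n : ℝ) + 1) * c := by ring
            rw [h1', h2']; nlinarith [hc]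
          linarith
        · have := (hh1 n).1; linarith
      · have := (hh1 n).1
        calc min _ _ ≤ _ := min_le_right _ _
          _ < h1 n := by linarith
  · intro H hH
    obtain ⟨n, hn⟩ := Archimedean.arch H hc
    have hnc : H ≤ (n : ℝ) * c := by
      simpa [nsmul_eq_mul] using hn
    refine ⟨n, ((n : ℝ) * c + h1 n) / 2, ?_, ?_⟩
    · have hn1 : (n : ℝ) * c < h1 n := by
        have := (hh1 n).1
        calc (n : ℝ) * c = (n : ℝ) * a * Real.sqrt (a ^ 2 - 2) := by ring
          _ < h1 n := this
      linarith
    · have hn1 : (n : ℝ) * c < h1 n := by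
        have := (hh1 n).1
        calc (n : ℝ) * c = (n : ℝ) * a * Real.sqrt (a ^ 2 - 2) := by ring
          _ < h1 n := this
      exact key n _ (by linarith) (by linarith)
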